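/- If a morphism φ: A* → A* is acyclic, then φ has a leftmost conjugate and a rightmost conjugate. -/

import Mathlib

/-- `k`-fold concatenation of a word with itself. -/
def listPow {A : Type*} (l : List A) : ℕ → List A
  | 0 => []
  | n + 1 => l ++ listPow l n

/-- Application of a morphism (given by its images of letters) to a word. -/
def wordMap {A : Type*} (φ : A → List A) (x : List A) : List A :=
  x.flatMap φ

/-- `k`-th power (iterate) of a morphism. -/
def morPow {A : Type*} (φ : A → List A) : ℕ → A → List A
  | 0 => fun a => [a]
  | k + 1 => fun a => wordMap (morPow φ k) (φ a)

/-- `φ` is a right conjugate of `ψ` (notation `ψ ▷ φ`):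
there is a word `w` with `w ψ(x) = φ(x) w` for all `x`. -/
def IsRightConjOf {A : Type*} (φ ψ : A → List A) : Prop :=
  ∃ w : List A, ∀ a : A, w ++ ψ a = φ a ++ w

/-- `φ` and `ψ` are conjugate morphisms. -/
def AreConjugates {A : Type*} (φ ψ : A → List A) : Prop :=
  IsRightConjOf φ ψ ∨ IsRightConjOf ψ φ

/-- `φL` is the leftmost conjugate of `φ`. -/
def IsLeftmostConjOf {A : Type*} (φL φ : A → List A) : Prop :=
  IsRightConjOf φ φL ∧ ∀ ψ : A → List A, IsRightConjOf φL ψ → ψ = φL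

/-- `φR` is the rightmost conjugate of `φ`. -/
def IsRightmostConjOf {A : Type*} (φR φ : A → List A) : Prop :=
  IsRightConjOf φR φ ∧ ∀ ψ : A → List A, IsRightConjOf ψ φR → ψ = φR

/-- A morphism is cyclic if all images of letters are powers of a common word. -/
def CyclicMorphism {A : Type*} (φ : A → List A) : Prop :=
  ∃ w : List A, ∀ a : A, ∃ n : ℕ, φ a = listPow w n

/-- First letter of the image of each letter. -/
def Fst {A : Type*} (φ : A → List A) : A → Option A :=
  fun a => (φ a).head?

/-- Last letter of the image of each letter. -/
def Lst {A : Type*} (φ : A → List A) : A → Option A :=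
  fun a => (φ a).getLast?

/-- A morphism is in class P if there is a palindrome `p` which is a prefix of
every `φ(α)` and such that `φ(α) p` is a palindrome for every letter `α`. -/
def IsClassP {A : Type*} (φ : A → List A) : Prop :=
  ∃ p : List A, p.reverse = p ∧
    ∀ a : A, p <+: φ a ∧ (φ a ++ p).reverse = φ a ++ p

/-- The finite word `v` is a factor of the infinite word `u`. -/
def IsFactor {A : Type*} (u : ℕ → A) (v : List A) : Prop :=
  ∃ i : ℕ, v = (List.range v.length).map fun j => u (i + j)

/-- An infinite word is uniformly recurrent if every factor occurs in every
sufficiently long factor. -/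
def UnifRecurrent {A : Type*} (u : ℕ → A) : Prop :=
  ∀ v : List A, IsFactor u v → ∃ n : ℕ,
    ∀ f : List A, IsFactor u f → f.length = n → v <:+: f

/-- An infinite word is eventually periodic. -/
def EventuallyPeriodic {A : Type*} (u : ℕ → A) : Prop :=
  ∃ p : ℕ, 0 < p ∧ ∃ N : ℕ, ∀ n : ℕ, N ≤ n → u (n + p) = u n

/-- A factor `v` is right special in `u`. -/
def RightSpecial {A : Type*} (u : ℕ → A) (v : List A) : Prop :=
  ∃ x y : A, x ≠ y ∧ IsFactor u (v ++ [x]) ∧ IsFactor u (v ++ [y])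

/-- A factor `v` is left special in `u`. -/
def LeftSpecial {A : Type*} (u : ℕ → A) (v : List A) : Prop :=
  ∃ x y : A, x ≠ y ∧ IsFactor u (x :: v) ∧ IsFactor u (y :: v)

section PrivateAux

private def PerWord {A : Type*} (u : ℕ → A) (p : ℕ) : Prop := ∀ n, u (n + p) = u n

private lemma perWord_mul {A : Type*} {u : ℕ → A} {p : ℕ} (h : PerWord u p) (k : ℕ) :
    PerWord u (k * p) := by
  induction k with
  | zero => intro n; simp
  | succ k ih =>
    intro n
    have : n + (k + 1) * p = (n + k * p) + p := by ring
    rw [this, h (n + k * p)]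
    exact ih n

private lemma perWord_gcd {A : Type*} (u : ℕ → A) :
    ∀ p q, PerWord u p → PerWord u q → PerWord u (Nat.gcd p q) := by
  intro p q
  induction p, q using Nat.gcd.induction with
  | H0 n => intro _ hq; simpa using hq
  | H1 m n hm ih =>
    intro hp hq
    rw [Nat.gcd_rec]
    refine ih ?_ hp
    intro k
    have h1 : PerWord u (n / m * m) := perWord_mul hp (n / m)
    calc u (k + n % m) = u (k + n % m + n / m * m) := (h1 _).symm
      _ = u (k + n) := by rw [add_assoc, Nat.mod_add_div']
      _ = u k := hq k

private lemma perWord_finset_gcd {A B : Type*} (u : ℕ → A) (s : Finset B) (f : B → ℕ)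
    (h : ∀ b ∈ s, PerWord u (f b)) : PerWord u (s.gcd f) := by
  classical
  induction s using Finset.induction with
  | empty => intro n; simp [Finset.gcd_empty]
  | @insert b s hb ih =>
    rw [Finset.gcd_insert]
    exact perWord_gcd u _ _ (h b (Finset.mem_insert_self b s))
      (ih fun c hc => h c (Finset.mem_insert_of_mem hc))

private lemma listPow_length {A : Type*} (l : List A) (n : ℕ) :
    (listPow l n).length = n * l.length := by
  induction n with
  | zero => simp [listPow]
  | succ n ih => simp [listPow, ih, Nat.succ_mul, Nat.add_comm]

private lemma listPow_getElem? {A : Type*} (l : List A) (n i : ℕ) (h : i < n * l.length) :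
    (listPow l n)[i]? = l[i % l.length]? := by
  induction n generalizing i with
  | zero => omega
  | succ n ih =>
    have h' : i < n * l.length + l.length := by rw [Nat.succ_mul] at h; omega
    show (l ++ listPow l n)[i]? = _
    by_cases hi : i < l.length
    · rw [List.getElem?_append_left hi, Nat.mod_eq_of_lt hi]
    · push_neg at hi
      rw [List.getElem?_append_right hi, ih (i - l.length) (by omega)]
      congr 1
      conv_rhs => rw [show i = (i - l.length) + l.length by omega]
      rw [Nat.add_mod_right]

private lemma listPow_comm {A : Type*} (l : List A) (n : ℕ) :
    listPow l n ++ l = l ++ listPow l n := by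
  induction n with
  | zero => simp [listPow]
  | succ n ih =>
    show (l ++ listPow l n) ++ l = l ++ (l ++ listPow l n)
    rw [List.append_assoc, ih]

private lemma listPow_reverse {A : Type*} (l : List A) (n : ℕ) :
    (listPow l n).reverse = listPow l.reverse n := by
  induction n with
  | zero => simp [listPow]
  | succ n ih =>
    show (l ++ listPow l n).reverse = l.reverse ++ listPow l.reverse n
    rw [List.reverse_append, ih, listPow_comm]

private lemma prefix_listPow_aux {A : Type*} {φ : A → List A} {w : List A}
    (hw : ∀ a, w <+: φ a ++ w) (a : A) (n : ℕ) :
    w <+: listPow (φ a) n ++ w := by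
  induction n with
  | zero => simp [listPow]
  | succ n ih =>
    obtain ⟨t, ht⟩ := ih
    have : listPow (φ a) (n + 1) ++ w = (φ a ++ w) ++ t := by
      show (φ a ++ listPow (φ a) n) ++ w = _
      rw [List.append_assoc, ← ht, List.append_assoc]
    rw [this]
    exact (hw a).trans (List.prefix_append _ t)

private lemma exists_leftmost {A : Type*} [Fintype A] (φ : A → List A)
    (h : ¬ CyclicMorphism φ) : ∃ φL : A → List A, IsLeftmostConjOf φL φ := by
  classical
  have hex : ∃ a₀ : A, φ a₀ ≠ [] := by
    by_contra hc
    push_neg at hc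
    exact h ⟨[], fun a => ⟨0, by simp [listPow, hc a]⟩⟩
  obtain ⟨a₀, ha₀⟩ := hex
  have hx : 0 < (φ a₀).length := List.length_pos_iff.mpr ha₀
  -- the set of conjugating words
  have hbound : ∃ N, ∀ w : List A, (∀ a, w <+: φ a ++ w) → w.length ≤ N := by
    by_contra hub
    push_neg at hub
    set u : ℕ → A := fun n => (φ a₀)[n % (φ a₀).length]'(Nat.mod_lt n hx) with hu
    have key : ∀ w : List A, (∀ a, w <+: φ a ++ w) → ∀ i, i < w.length →
        w[i]? = some (u i) := by
      intro w hw i hi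
      have h1 : w <+: listPow (φ a₀) w.length ++ w := prefix_listPow_aux hw a₀ w.length
      have hlen : w.length ≤ (listPow (φ a₀) w.length).length := by
        rw [listPow_length]
        exact Nat.le_mul_of_pos_right _ hx
      have h2 : w <+: listPow (φ a₀) w.length := by
        have h3 := List.prefix_iff_eq_take.mp h1
        rw [List.take_append_of_le_length hlen] at h3
        conv_lhs => rw [h3]
        exact List.take_prefix _ _
      obtain ⟨t, ht⟩ := h2
      rw [show w[i]? = (w ++ t)[i]? from (List.getElem?_append_left hi).symm, ht,
        listPow_getElem? _ _ _ (lt_of_lt_of_le hi (by rw [← listPow_length]; exact hlen)),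
        List.getElem?_eq_getElem (Nat.mod_lt i hx)]
    have hper : ∀ a : A, PerWord u (φ a).length := by
      intro a n
      obtain ⟨w, hw, hlen⟩ := hub (n + (φ a).length)
      obtain ⟨t, ht⟩ := hw a
      have e1 : w[n + (φ a).length]? = w[n]? := by
        have e2 : w[n + (φ a).length]? = (w ++ t)[n + (φ a).length]? := by
          rw [List.getElem?_append_left (by omega)]
        rw [e2, ht, List.getElem?_append_right (by omega), Nat.add_sub_cancel]
      have h2 := key w hw (n + (φ a).length) (by omega)
      have h3 := key w hw n (by omega)
      rw [h2, h3] at e1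
      exact Option.some.inj e1
    have hpref : ∀ a : A, ∀ i, i < (φ a).length → (φ a)[i]? = some (u i) := by
      intro a i hi
      obtain ⟨w, hw, hlen⟩ := hub (φ a).length
      obtain ⟨t, ht⟩ := hw a
      have e1 : w[i]? = (φ a)[i]? := by
        rw [show w[i]? = (w ++ t)[i]? from (List.getElem?_append_left (by omega)).symm,
          ht, List.getElem?_append_left hi]
      rw [← e1]
      exact key w hw i (by omega)
    set g := Finset.univ.gcd (fun a : A => (φ a).length) with hg
    have hPg : PerWord u g := perWord_finset_gcd u _ _ (fun a _ => hper a)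
    have hgdvd : ∀ a : A, g ∣ (φ a).length := fun a => Finset.gcd_dvd (Finset.mem_univ a)
    have hgpos : 0 < g := by
      rcases Nat.eq_zero_or_pos g with h0 | hp
      · exfalso
        have := hgdvd a₀
        rw [h0] at this
        rw [Nat.eq_zero_of_zero_dvd this] at hx
        omega
      · exact hp
    apply h
    refine ⟨(List.range g).map u, fun a => ⟨(φ a).length / g, ?_⟩⟩
    have hlr : ((List.range g).map u).length = g := by simp
    have hlen2 : (listPow ((List.range g).map u) ((φ a).length / g)).length
        = (φ a).length := by
      rw [listPow_length, hlr, Nat.div_mul_cancel (hgdvd a)]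
    apply List.ext_getElem?
    intro i
    by_cases hi : i < (φ a).length
    · rw [hpref a i hi, listPow_getElem? _ _ _ (by rw [hlr, Nat.div_mul_cancel (hgdvd a)]; exact hi),
        hlr]
      have : ((List.range g).map u)[i % g]? = some (u (i % g)) := by
        simp [List.getElem?_map, List.getElem?_range (Nat.mod_lt i hgpos)]
      rw [this]
      congr 1
      conv_lhs => rw [show i = i % g + i / g * g by rw [Nat.mod_add_div']]
      exact perWord_mul hPg (i / g) (i % g)
    · rw [List.getElem?_eq_none (by omega), List.getElem?_eq_none (by omega : (listPow ((List.range g).map u) ((φ a).length / g)).length ≤ i)]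
  obtain ⟨N, hN⟩ := hbound
  set S : Set ℕ := {k | ∃ w : List A, (∀ a, w <+: φ a ++ w) ∧ w.length = k} with hS
  have hSne : S.Nonempty := ⟨0, [], fun a => ⟨φ a ++ [], by simp⟩, rfl⟩
  have hSbdd : BddAbove S := ⟨N, fun k ⟨w, hw, hl⟩ => hl ▸ hN w hw⟩
  obtain ⟨w, hw, hwlen⟩ := Nat.sSup_mem hSne hSbdd
  refine ⟨fun a => (φ a ++ w).drop w.length, ⟨w, fun a => ?_⟩, ?_⟩
  · obtain ⟨t, ht⟩ := hw a
    show w ++ (φ a ++ w).drop w.length = φ a ++ w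
    rw [← ht, List.drop_left]
  · intro ψ hψ
    obtain ⟨v, hv⟩ := hψ
    have hWv : ∀ a, (w ++ v) <+: φ a ++ (w ++ v) := by
      intro a
      obtain ⟨t, ht⟩ := hw a
      have hφL : (φ a ++ w).drop w.length = t := by rw [← ht, List.drop_left]
      have h2 : v ++ ψ a = (φ a ++ w).drop w.length ++ v := hv a
      rw [hφL] at h2
      refine ⟨ψ a, ?_⟩
      calc (w ++ v) ++ ψ a = w ++ (v ++ ψ a) := by rw [List.append_assoc]
        _ = w ++ (t ++ v) := by rw [h2]
        _ = (w ++ t) ++ v := by rw [List.append_assoc]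
        _ = (φ a ++ w) ++ v := by rw [ht]
        _ = φ a ++ (w ++ v) := by rw [List.append_assoc]
    have hle : (w ++ v).length ≤ w.length := by
      rw [hwlen]
      exact le_csSup hSbdd ⟨w ++ v, hWv, rfl⟩
    have hv0 : v = [] := by
      rw [List.length_append] at hle
      exact List.eq_nil_of_length_eq_zero (by omega)
    funext a
    have h3 : v ++ ψ a = (φ a ++ w).drop w.length ++ v := hv a
    rw [hv0] at h3
    show ψ a = (φ a ++ w).drop w.length
    simpa using h3

private lemma exists_rightmost {A : Type*} [Fintype A] (φ : A → List A)
    (h : ¬ CyclicMorphism φ) : ∃ φR : A → List A, IsRightmostConjOf φR φ := by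
  have hρ : ¬ CyclicMorphism (fun a => (φ a).reverse) := by
    rintro ⟨r, hr⟩
    apply h
    refine ⟨r.reverse, fun a => ?_⟩
    obtain ⟨n, hn⟩ := hr a
    refine ⟨n, ?_⟩
    have hn' : (φ a).reverse = listPow r n := hn
    rw [← (φ a).reverse_reverse, hn', listPow_reverse]
  obtain ⟨φL, hL1, hL2⟩ := exists_leftmost _ hρ
  refine ⟨fun a => (φL a).reverse, ?_, ?_⟩
  · obtain ⟨v, hv⟩ := hL1
    refine ⟨v.reverse, fun a => ?_⟩
    have := congrArg List.reverse (hv a)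
    simp only [List.reverse_append, List.reverse_reverse] at this
    exact this.symm
  · rintro ψ ⟨v, hv⟩
    have hrev : (fun a => (ψ a).reverse) = φL := by
      apply hL2
      refine ⟨v.reverse, fun a => ?_⟩
      have h3 : v ++ (φL a).reverse = ψ a ++ v := hv a
      have h4 := congrArg List.reverse h3
      simp only [List.reverse_append, List.reverse_reverse] at h4
      show v.reverse ++ (ψ a).reverse = φL a ++ v.reverse
      exact h4.symm
    funext a
    have h2 := congrFun hrev a
    show ψ a = (φL a).reverse
    rw [← h2, List.reverse_reverse]

end PrivateAux

/-- An acyclic morphism has a leftmost and a rightmost conjugate. -/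
theorem stmt6 {A : Type*} [Fintype A] (φ : A → List A) (h : ¬ CyclicMorphism φ) :
    (∃ φL : A → List A, IsLeftmostConjOf φL φ) ∧
    (∃ φR : A → List A, IsRightmostConjOf φR φ) := by
  exact ⟨exists_leftmost φ h, exists_rightmost φ h⟩
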